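/- Let V be a perfectoid valuation ring of mixed characteristic (0, p), i.e., a p-adically complete and separated valuation ring whose fraction field is a perfectoid field of characteristic 0. Let 𝔭 = rad(pV) be the radical of the ideal (p). Then the localization V_𝔭 is again p-adically complete and separated, and hence is a perfectoid valuation ring of rank one. -/
import Mathlib

section Aux

/-- In a valuation ring, the radical of a principal ideal generated by a nonunit is prime. -/
lemma aux_radical_span_isPrime {V : Type*} [CommRing V] [IsDomain V] [ValuationRing V]
    (r : V) (hru : ¬ IsUnit r) : ((Ideal.span {r}).radical).IsPrime := by
  constructor
  · rw [Ne, Ideal.radical_eq_top, Ideal.span_singleton_eq_top]; exact hru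
  · intro a b hab
    rcases ValuationRing.dvd_total a b with h | h
    · right
      obtain ⟨n, hn⟩ := Ideal.mem_radical_iff.1 hab
      refine Ideal.mem_radical_iff.2 ⟨2 * n, Ideal.mem_span_singleton.2 ?_⟩
      have h1 : (a * b) ^ n ∣ b ^ (2 * n) := by
        rw [pow_mul, pow_two]
        exact pow_dvd_pow_of_dvd (mul_dvd_mul h dvd_rfl) n
      exact dvd_trans (Ideal.mem_span_singleton.1 hn) h1
    · left
      obtain ⟨n, hn⟩ := Ideal.mem_radical_iff.1 hab
      refine Ideal.mem_radical_iff.2 ⟨2 * n, Ideal.mem_span_singleton.2 ?_⟩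
      have h1 : (a * b) ^ n ∣ a ^ (2 * n) := by
        rw [pow_mul, pow_two]
        exact pow_dvd_pow_of_dvd (mul_dvd_mul dvd_rfl h) n
      exact dvd_trans (Ideal.mem_span_singleton.1 hn) h1

/-- Translation between `SModEq` with respect to powers of a principal ideal and divisibility. -/
lemma aux_smodeq_iff {R : Type*} [CommRing R] (a b r : R) (n : ℕ) :
    a ≡ b [SMOD ((Ideal.span {r}) ^ n • ⊤ : Submodule R R)] ↔ r ^ n ∣ a - b := by
  rw [SModEq.sub_mem, smul_eq_mul, Ideal.mul_top, Ideal.span_singleton_pow,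
    Ideal.mem_span_singleton]

end Aux

/-- Let `V` be a perfectoid valuation ring of mixed
characteristic `(0,p)`: a `p`-adically complete and separated valuation ring
with `p ≠ 0`, `p` a nonunit, admitting `ϖ` with `ϖ^p ∣ p`, and with surjective
Frobenius on `V/p`.  Let `𝔭 = rad(pV)`.  Then `𝔭` is prime and the
localization `V_𝔭` is again `p`-adically complete and separated, and is a
perfectoid valuation ring of rank one (a valuation ring, `p` ≠ 0, `ϖ^p ∣ p`,
Frobenius surjective mod `p`, with exactly one nonzero prime ideal). -/
theorem localization_at_radical_p_perfectoid
    (V : Type*) [CommRing V] [IsDomain V] [ValuationRing V]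
    (p : ℕ) (hp : p.Prime)
    (hp0 : (p : V) ≠ 0) (hpu : ¬ IsUnit (p : V))
    (hcomplete : IsAdicComplete (Ideal.span {(p : V)}) V)
    (hϖ : ∃ ϖ : V, ϖ ^ p ∣ (p : V))
    (hfrob : ∀ y : V ⧸ Ideal.span {(p : V)}, ∃ z, z ^ p = y) :
    ∃ hpr : ((Ideal.span {(p : V)}).radical).IsPrime,
      let L := Localization (@Ideal.primeCompl V _
        ((Ideal.span {(p : V)}).radical) hpr)
      IsAdicComplete (Ideal.span {(p : L)}) L ∧
      (∃ _hd : IsDomain L, ValuationRing L) ∧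
      (p : L) ≠ 0 ∧ ¬ IsUnit (p : L) ∧
      (∃ ϖ : L, ϖ ^ p ∣ (p : L)) ∧
      (∀ y : L ⧸ Ideal.span {(p : L)}, ∃ z, z ^ p = y) ∧
      (∃! q : Ideal L, q.IsPrime ∧ q ≠ ⊥) := by
  have hpru : ((Ideal.span {(p : V)}).radical).IsPrime :=
    aux_radical_span_isPrime _ hpu
  refine ⟨hpru, ?_⟩
  intro L
  set 𝔭 : Ideal V := (Ideal.span {(p : V)}).radical with h𝔭
  haveI : 𝔭.IsPrime := hpru
  have hp𝔭 : (p : V) ∈ 𝔭 := Ideal.le_radical (Ideal.mem_span_singleton_self _)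
  -- basic facts about the localization
  let ι : V →+* L := algebraMap V L
  have hle : 𝔭.primeCompl ≤ nonZeroDivisors V := by
    intro s hs
    exact mem_nonZeroDivisors_of_ne_zero (fun h => hs (h ▸ 𝔭.zero_mem))
  have hinj : Function.Injective ι := IsLocalization.injective L hle
  haveI hdom : IsDomain L := IsLocalization.isDomain_localization hle
  have hunit : ∀ s : 𝔭.primeCompl, IsUnit (ι (s : V)) :=
    fun s => IsLocalization.map_units L s
  have hpL : (p : L) = ι (p : V) := (map_natCast ι p).symm
  have hpL0 : (p : L) ≠ 0 := by
    rw [hpL]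
    intro h
    exact hp0 (hinj (h.trans (map_zero ι).symm))
  -- every element of `𝔭.primeCompl` divides `p` in `V`
  have hsdvd : ∀ s : V, s ∈ 𝔭.primeCompl → s ∣ (p : V) := by
    intro s hs
    rcases ValuationRing.dvd_total s (p : V) with h | h
    · exact h
    · exact absurd (Ideal.le_radical (Ideal.mem_span_singleton.2 h)) hs
  -- `p · L ⊆ ι(V)`
  have hsub : ∀ x : L, ∃ v : V, (p : L) * x = ι v := by
    intro x
    obtain ⟨⟨v, s⟩, hx⟩ := IsLocalization.surj 𝔭.primeCompl x
    obtain ⟨u, hu⟩ := hsdvd s s.2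
    refine ⟨u * v, ?_⟩
    have hx' : x * ι (s : V) = ι v := hx
    have h1 : ι (p : V) = ι (s : V) * ι u := by rw [← map_mul]; exact congrArg ι hu
    rw [hpL, h1, map_mul, ← hx']
    ring
  -- Hausdorff property of `L`
  have hhaus : IsHausdorff (Ideal.span {(p : L)}) L := by
    constructor
    intro x hx
    have hd : ∀ n : ℕ, (p : L) ^ n ∣ x := by
      intro n
      have := (aux_smodeq_iff x 0 (p : L) n).1 (hx n)
      simpa using this
    obtain ⟨w, hw⟩ := hsub x
    have hwn : ∀ n : ℕ, (p : V) ^ n ∣ w := by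
      intro n
      obtain ⟨c, hc⟩ := hd (n + 1)
      obtain ⟨d, hdq⟩ := hsub c
      have h1 : ι ((p : V) ^ (n + 1) * d) = ι w := by
        rw [map_mul, map_pow, map_natCast, ← hw, hc, ← hdq]
        ring
      exact dvd_trans (pow_dvd_pow _ (Nat.le_succ n)) ⟨d, (hinj h1).symm⟩
    have hw0 : w = 0 := by
      refine hcomplete.toIsHausdorff.haus w (fun n => ?_)
      rw [aux_smodeq_iff, sub_zero]
      exact hwn n
    have : (p : L) * x = 0 := by rw [hw, hw0, map_zero]
    rcases mul_eq_zero.1 this with h | h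
    · exact absurd h hpL0
    · exact h
  -- Precompleteness of `L`
  have hprec : IsPrecomplete (Ideal.span {(p : L)}) L := by
    constructor
    intro f hf
    have hfd : ∀ {m n : ℕ}, m ≤ n → (p : L) ^ m ∣ f m - f n :=
      fun {m n} h => (aux_smodeq_iff _ _ _ _).1 (hf h)
    choose w hw using fun n => hsub (f (n + 1))
    have hwcoh : ∀ {m n : ℕ}, m ≤ n → w m ≡ w n [SMOD
        ((Ideal.span {(p : V)}) ^ m • ⊤ : Submodule V V)] := by
      intro m n h
      rw [aux_smodeq_iff]
      obtain ⟨c, hc⟩ := hfd (Nat.succ_le_succ h)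
      obtain ⟨d, hdq⟩ := hsub c
      have h1 : ι ((p : V) ^ (m + 1) * d) = ι (w m - w n) := by
        rw [map_mul, map_pow, map_natCast, map_sub, ← hw m, ← hw n, ← hdq, ← mul_sub, hc,
          pow_succ]
        ring
      exact dvd_trans (pow_dvd_pow _ (Nat.le_succ m)) ⟨d, (hinj h1).symm⟩
    obtain ⟨W, hW⟩ := hcomplete.toIsPrecomplete.prec hwcoh
    have hWd : ∀ n : ℕ, ∃ b : V, w n - W = (p : V) ^ n * b := by
      intro n
      obtain ⟨b, hb⟩ := (aux_smodeq_iff _ _ _ _).1 (hW n)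
      exact ⟨b, hb⟩
    obtain ⟨b0, hb0⟩ := hWd 1
    refine ⟨f 2 - ι b0, fun n => ?_⟩
    rw [aux_smodeq_iff]
    -- key identity: `p * (f 2 - ι b0) = ι W`
    have hkey : (p : L) * (f 2 - ι b0) = ι W := by
      have h1 : W = w 1 - (p : V) ^ 1 * b0 := by rw [← hb0]; ring
      rw [h1, map_sub, map_mul, map_pow, map_natCast, ← hw 1]
      ring
    obtain ⟨b, hb⟩ := hWd (n + 1)
    have h2 : (p : L) * (f 2 - ι b0) = (p : L) * (f (n + 2) - (p : L) ^ n * ι b) := by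
      rw [hkey]
      have h1 : W = w (n + 1) - (p : V) ^ (n + 1) * b := by rw [← hb]; ring
      rw [h1, map_sub, map_mul, map_pow, map_natCast, ← hw (n + 1)]
      ring
    have h3 : f 2 - ι b0 = f (n + 2) - (p : L) ^ n * ι b :=
      mul_left_cancel₀ hpL0 h2
    obtain ⟨c, hc⟩ := hfd (show n ≤ n + 2 by omega)
    refine ⟨c + ι b, ?_⟩
    rw [h3, mul_add, ← hc]
    ring
  -- `L` is a valuation ring
  have hval : ValuationRing L := by
    have key : ∀ (a b : L) (va vb : V) (sa sb : 𝔭.primeCompl) (c : V),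
        a * ι (sa : V) = ι va → b * ι (sb : V) = ι vb →
        va * (sb : V) * c = vb * (sa : V) → a * ι c = b := by
      intro a b va vb sa sb c ha hb hc
      have hu : IsUnit (ι (sa : V) * ι (sb : V)) := (hunit sa).mul (hunit sb)
      refine hu.mul_right_cancel ?_
      calc a * ι c * (ι (sa : V) * ι (sb : V))
          = (a * ι (sa : V)) * (ι c * ι (sb : V)) := by ring
        _ = ι (va * (sb : V) * c) := by rw [ha, ← map_mul, ← map_mul]; congr 1; ring
        _ = ι vb * ι (sa : V) := by rw [hc, map_mul]
        _ = (b * ι (sb : V)) * ι (sa : V) := by rw [hb]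
        _ = b * (ι (sa : V) * ι (sb : V)) := by ring
    refine @ValuationRing.mk L _ hdom ⟨?_⟩
    intro a b
    obtain ⟨⟨va, sa⟩, ha⟩ := IsLocalization.surj 𝔭.primeCompl a
    obtain ⟨⟨vb, sb⟩, hb⟩ := IsLocalization.surj 𝔭.primeCompl b
    have ha' : a * ι (sa : V) = ι va := ha
    have hb' : b * ι (sb : V) = ι vb := hb
    rcases ValuationRing.cond (va * (sb : V)) (vb * (sa : V)) with ⟨c, hc | hc⟩
    · exact ⟨ι c, Or.inl (key a b va vb sa sb c ha' hb' hc)⟩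
    · exact ⟨ι c, Or.inr (key b a vb va sb sa c hb' ha' hc)⟩
  -- `p` is not a unit in `L`
  have hpuL : ¬ IsUnit (p : L) := by
    rw [hpL]
    intro h
    exact (IsLocalization.AtPrime.isUnit_to_map_iff L 𝔭 (p : V)).1 h hp𝔭
  -- Frobenius is surjective mod `p` on `L`
  have hfrL : ∀ y : L ⧸ Ideal.span {(p : L)}, ∃ z, z ^ p = y := by
    have hfr : ∀ v : V, ∃ a k : V, a ^ p = v + (p : V) * k := by
      intro v
      obtain ⟨z, hz⟩ := hfrob (Ideal.Quotient.mk _ v)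
      obtain ⟨z', rfl⟩ := Ideal.Quotient.mk_surjective z
      rw [← map_pow, Ideal.Quotient.eq] at hz
      obtain ⟨k, hk⟩ := Ideal.mem_span_singleton.1 hz
      exact ⟨z', k, by rw [← hk]; ring⟩
    intro y
    obtain ⟨x, rfl⟩ := Ideal.Quotient.mk_surjective y
    obtain ⟨⟨v, s⟩, hx⟩ := IsLocalization.surj 𝔭.primeCompl x
    have hx' : x * ι (s : V) = ι v := hx
    obtain ⟨a, k, hak⟩ := hfr (s : V)
    obtain ⟨b, l, hbl⟩ := hfr v
    have ha𝔭 : a ∈ 𝔭.primeCompl := by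
      intro hmem
      have : (s : V) ∈ 𝔭 := by
        have hap : a ^ p ∈ 𝔭 := Ideal.pow_mem_of_mem _ hmem p hp.pos
        have : (s : V) = a ^ p - (p : V) * k := by rw [hak]; ring
        rw [this]
        exact Ideal.sub_mem _ hap (Ideal.mul_mem_right _ _ hp𝔭)
      exact s.2 this
    have hua : IsUnit (ι a) := hunit ⟨a, ha𝔭⟩
    set z : L := ι b * ↑hua.unit⁻¹ with hz
    have hza : z * ι a = ι b := by
      rw [hz, mul_assoc]
      nth_rewrite 2 [← hua.unit_spec]
      rw [Units.inv_mul, mul_one]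
    have hcomp : (z ^ p - x) * ((ι a) ^ p * ι (s : V)) = (p : L) * ι (l * (s : V) - v * k) := by
      have h1 : z ^ p * (ι a) ^ p = ι (b ^ p) := by rw [← mul_pow, hza, map_pow]
      have h2 : (z ^ p - x) * ((ι a) ^ p * ι (s : V))
          = (z ^ p * (ι a) ^ p) * ι (s : V) - (x * ι (s : V)) * (ι a) ^ p := by ring
      rw [h2, h1, hx', ← map_pow, ← map_mul, ← map_mul, hpL, ← map_mul, ← map_sub]
      congr 1
      rw [hbl, hak]
      ring
    have hu2 : IsUnit ((ι a) ^ p * ι (s : V)) := (hua.pow p).mul (hunit s)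
    have hdvd : (p : L) ∣ z ^ p - x := by
      rw [← hu2.dvd_mul_right]
      exact ⟨ι (l * (s : V) - v * k), hcomp⟩
    exact ⟨Ideal.Quotient.mk _ z, by
      rw [← map_pow, Ideal.Quotient.eq]
      exact Ideal.mem_span_singleton.2 hdvd⟩
  -- unique nonzero prime
  have huniq : ∃! q : Ideal L, q.IsPrime ∧ q ≠ ⊥ := by
    have hmax : ∀ q : Ideal L, q.IsPrime → q ≠ ⊥ → q = IsLocalRing.maximalIdeal L := by
      intro q hq hq0
      haveI := hq
      have hcq : (Ideal.comap ι q).IsPrime := Ideal.IsPrime.comap ι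
      have hqmap : Ideal.map ι (Ideal.comap ι q) = q :=
        IsLocalization.map_comap 𝔭.primeCompl L q
      have hcq0 : Ideal.comap ι q ≠ ⊥ := by
        intro h
        rw [h, Ideal.map_bot] at hqmap
        exact hq0 hqmap.symm
      obtain ⟨x, hxq, hx0⟩ := (Submodule.ne_bot_iff _).1 hcq0
      have hpq : (p : V) ∈ Ideal.comap ι q := by
        by_contra hpn
        have hall : ∀ n : ℕ, (p : V) ^ n ∣ x := by
          intro n
          rcases ValuationRing.dvd_total ((p : V) ^ n) x with h | h
          · exact h
          · exact absurd (hcq.mem_of_pow_mem n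
              (Ideal.mem_of_dvd _ h hxq)) hpn
        refine absurd (hcomplete.toIsHausdorff.haus x (fun n => ?_)) hx0
        rw [aux_smodeq_iff, sub_zero]
        exact hall n
      have h1 : 𝔭 ≤ Ideal.comap ι q :=
        (hcq.radical_le_iff).2 ((Ideal.span_singleton_le_iff_mem _).2 hpq)
      have h2 : Ideal.comap ι q ≤ 𝔭 := by
        intro y hy
        by_contra hyn
        exact hq.ne_top (Ideal.eq_top_of_isUnit_mem q hy (hunit ⟨y, hyn⟩))
      have : Ideal.comap ι q = 𝔭 := le_antisymm h2 h1
      rw [← hqmap, this]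
      exact Localization.AtPrime.map_eq_maximalIdeal
    have hmne : IsLocalRing.maximalIdeal L ≠ ⊥ := by
      intro h
      have : (p : L) ∈ IsLocalRing.maximalIdeal L :=
        (IsLocalRing.mem_maximalIdeal _).2 (mem_nonunits_iff.2 hpuL)
      rw [h, Ideal.mem_bot] at this
      exact hpL0 this
    exact ⟨IsLocalRing.maximalIdeal L,
      ⟨(IsLocalRing.maximalIdeal.isMaximal L).isPrime, hmne⟩,
      fun q ⟨hq, hq0⟩ => hmax q hq hq0⟩
  obtain ⟨ϖ, hϖd⟩ := hϖ
  haveI := hhaus; haveI := hprec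
  exact ⟨IsAdicComplete.mk, ⟨hdom, hval⟩, hpL0, hpuL,
    ⟨ι ϖ, by rw [hpL, ← map_pow]; exact map_dvd ι hϖd⟩, hfrL, huniq⟩
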